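/- arXiv:1710.05619 — 2 statements merged into one kernel-verified Lean document; each statement's English description precedes it below -/
import Mathlib

section
/- Let G be a simple graph and let C be a cycle of G containing consecutive vertices w, v, x, y, z, u. Let a, b, c be three pairwise distinct vertices of G not on C such that a is adjacent to v and z, b is adjacent to w and x, and c is adjacent to y and u. Then G contains a cycle of length |C| + 3 whose vertex set is V(C) ∪ {a, b, c}; the new cycle is obtained from C by replacing the path (w, v, x, y, z, u) with the path (w, b, x, v, a, z, y, c, u). -/
open SimpleGraph

private lemma walk_cons_of_edge {V : Type*} {G : SimpleGraph V} {v x w' : V}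
    (p : G.Walk v w') (hp : v ∉ p.support.tail) (he : s(v, x) ∈ p.edges) :
    ∃ (h : G.Adj v x) (q : G.Walk x w'), p = Walk.cons h q := by
  cases p with
  | nil => simp at he
  | @cons _ t _ h q =>
    rw [Walk.edges_cons, List.mem_cons] at he
    rcases he with he | he
    · rw [Sym2.eq_iff] at he
      rcases he with ⟨-, rfl⟩ | ⟨rfl, rfl⟩
      · exact ⟨h, q, rfl⟩
      · exact absurd (by simpa using q.start_mem_support) hp
    · exact absurd (by simpa using q.fst_mem_support_of_mem_edges he) hp

private lemma isCycle_reverse' {V : Type*} {G : SimpleGraph V} {w : V} {D : G.Walk w w}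
    (h : D.IsCycle) : D.reverse.IsCycle := by
  rw [Walk.isCycle_def] at h ⊢
  obtain ⟨ht, hn, hnd⟩ := h
  refine ⟨Walk.IsTrail.reverse D ht, ?_, ?_⟩
  · cases D with
    | nil => exact absurd rfl hn
    | cons h q => simp [Walk.reverse_cons]
  · cases D with
    | nil => exact absurd rfl hn
    | @cons _ t _ hadj E =>
      have h1 : E.support.reverse = w :: E.reverse.support.tail := by
        rw [← Walk.support_reverse]; exact Walk.support_eq_cons _
      have hnd' : E.support.Nodup := by simpa using hnd
      have h2 : (w :: E.reverse.support.tail).Nodup := by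
        rw [← h1, List.nodup_reverse]; exact hnd'
      rw [Walk.support_reverse, Walk.support_cons, List.reverse_cons, h1]
      simpa using ((List.perm_append_singleton w _).nodup_iff).mpr h2


private lemma closed_mem_support_iff_tail {V : Type*} {G : SimpleGraph V} {w t : V}
    {p : G.Walk w w} (hp : ¬ p.Nil) : t ∈ p.support ↔ t ∈ p.support.tail := by
  cases p with
  | nil => simp at hp
  | cons h q =>
    rw [Walk.mem_support_iff, Walk.support_cons, List.tail_cons]
    constructor
    · rintro (rfl | h)
      · exact q.end_mem_support
      · exact h
    · exact Or.inr

private lemma cycle_cons_of_edge {V : Type*} {G : SimpleGraph V} {w v w0 : V}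
    {C : G.Walk w0 w0} (hC : C.IsCycle) (he : s(w, v) ∈ C.edges) :
    ∃ (h : G.Adj w v) (E : G.Walk v w), (Walk.cons h E).IsCycle ∧
      (Walk.cons h E).length = C.length ∧
      (∀ t, t ∈ (Walk.cons h E).support ↔ t ∈ C.support) ∧
      (∀ e, e ∈ (Walk.cons h E).edges ↔ e ∈ C.edges) := by
  classical
  have hw : w ∈ C.support := C.fst_mem_support_of_mem_edges he
  have hCnil : ¬ C.Nil := hC.not_nil
  set D0 := C.rotate w hw with hD0def
  have hD0 : D0.IsCycle := hC.rotate hw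
  have hD0nil : ¬ D0.Nil := hD0.not_nil
  have hlen : D0.length = C.length := by
    rw [← Walk.length_darts, ← Walk.length_darts]
    exact (C.rotate_darts w hw).perm.length_eq
  have hedges : ∀ e, e ∈ D0.edges ↔ e ∈ C.edges := fun e =>
    (C.rotate_edges w hw).perm.mem_iff
  have hsupp : ∀ t, t ∈ D0.support ↔ t ∈ C.support := by
    intro t
    rw [closed_mem_support_iff_tail hD0nil, closed_mem_support_iff_tail hCnil]
    exact (C.support_rotate w hw).perm.mem_iff
  have he0 : s(w, v) ∈ D0.edges := (hedges _).mpr he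
  have hwv : w ≠ v := (C.adj_of_mem_edges he).ne
  obtain ⟨t, hadj, E0, hD0eq⟩ := Walk.not_nil_iff.mp hD0nil
  by_cases htv : t = v
  · subst htv
    exact ⟨hadj, E0, hD0eq ▸ hD0, hD0eq ▸ hlen,
      fun s => hD0eq ▸ hsupp s, fun e => hD0eq ▸ hedges e⟩
  · -- the edge s(w,v) is at the end: reverse
    have hE0nodup : E0.support.Nodup := by
      have := hD0.2
      rw [hD0eq, Walk.support_cons, List.tail_cons] at this
      exact this
    have he1 : s(w, v) ∈ E0.edges := by
      rw [hD0eq, Walk.edges_cons, List.mem_cons] at he0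
      rcases he0 with h1 | h1
      · rw [Sym2.eq_iff] at h1
        rcases h1 with ⟨-, h1⟩ | ⟨h1, -⟩
        · exact absurd h1.symm htv
        · exact absurd h1 hadj.ne
      · exact h1
    have hwrev : w ∉ E0.reverse.support.tail := by
      have h2 : E0.reverse.support.Nodup := by
        rw [Walk.support_reverse, List.nodup_reverse]; exact hE0nodup
      rw [E0.reverse.support_eq_cons] at h2
      exact (List.nodup_cons.mp h2).1
    have he2 : s(w, v) ∈ E0.reverse.edges := by
      rw [Walk.edges_reverse, List.mem_reverse]; exact he1
    obtain ⟨h2, F, hF⟩ := walk_cons_of_edge E0.reverse hwrev he2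
    have hDrev : D0.reverse = Walk.cons h2 (F.append (Walk.cons hadj.symm Walk.nil)) := by
      rw [hD0eq, Walk.reverse_cons, hF, Walk.cons_append]
    refine ⟨h2, F.append (Walk.cons hadj.symm Walk.nil), ?_, ?_, ?_, ?_⟩
    · rw [← hDrev]; exact isCycle_reverse' hD0
    · rw [← hDrev, Walk.length_reverse]; exact hlen
    · intro s
      rw [← hDrev, Walk.support_reverse, List.mem_reverse]; exact hsupp s
    · intro e
      rw [← hDrev, Walk.edges_reverse, List.mem_reverse]; exact hedges e

set_option maxHeartbeats 2000000 in
/-- Case 3a replacement: if `w, v, x, y, z, u` are consecutive vertices of a cycle `C` and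
`a, b, c` are pairwise distinct vertices off `C` with `a` adjacent to `v, z`, `b` adjacent
to `w, x`, and `c` adjacent to `y, u`, then `G` has a cycle of length `|C| + 3` on vertex
set `V(C) ∪ {a, b, c}`, obtained from `C` by replacing the path `(w, v, x, y, z, u)`
with the path `(w, b, x, v, a, z, y, c, u)`. -/
theorem case3a_replacement {V : Type*} (G : SimpleGraph V) {v0 : V}
    (C : G.Walk v0 v0) (hC : C.IsCycle) (w v x y z u a b c : V)
    (hdist : [w, v, x, y, z, u].Pairwise (· ≠ ·))
    (hwv : s(w, v) ∈ C.edges) (hvx : s(v, x) ∈ C.edges) (hxy : s(x, y) ∈ C.edges)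
    (hyz : s(y, z) ∈ C.edges) (hzu : s(z, u) ∈ C.edges)
    (habc : [a, b, c].Pairwise (· ≠ ·))
    (ha : a ∉ C.support) (hb : b ∉ C.support) (hc : c ∉ C.support)
    (hav : G.Adj a v) (haz : G.Adj a z) (hbw : G.Adj b w) (hbx : G.Adj b x)
    (hcy : G.Adj c y) (hcu : G.Adj c u) :
    ∃ (w0 : V) (C' : G.Walk w0 w0), C'.IsCycle ∧ C'.length = C.length + 3 ∧
      (∀ t, t ∈ C'.support ↔ t ∈ C.support ∨ t = a ∨ t = b ∨ t = c) ∧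
      {e | e ∈ C'.edges} =
        ({e | e ∈ C.edges} \ {s(w, v), s(v, x), s(x, y), s(y, z), s(z, u)}) ∪
          {s(w, b), s(b, x), s(x, v), s(v, a), s(a, z), s(z, y), s(y, c), s(c, u)} := by
  classical
  simp only [List.pairwise_cons, List.mem_cons, List.not_mem_nil, List.mem_singleton,
    forall_eq_or_imp, forall_eq, or_false, List.Pairwise.nil, and_true] at hdist habc
  obtain ⟨⟨h1,h2,h3,h4,h5⟩, ⟨h6,h7,h8,h9⟩, ⟨h10,h11,h12⟩, ⟨h13,h14⟩, h15, -⟩ := hdist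
  obtain ⟨⟨g1,g2⟩, g3, -⟩ := habc
  have nwv : w ≠ v := h1
  have nvw : v ≠ w := h1.symm
  have nwx : w ≠ x := h2
  have nxw : x ≠ w := h2.symm
  have nwy : w ≠ y := h3
  have nyw : y ≠ w := h3.symm
  have nwz : w ≠ z := h4
  have nzw : z ≠ w := h4.symm
  have nwu : w ≠ u := h5
  have nuw : u ≠ w := h5.symm
  have nvx : v ≠ x := h6
  have nxv : x ≠ v := h6.symm
  have nvy : v ≠ y := h7
  have nyv : y ≠ v := h7.symm
  have nvz : v ≠ z := h8
  have nzv : z ≠ v := h8.symm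
  have nvu : v ≠ u := h9
  have nuv : u ≠ v := h9.symm
  have nxy : x ≠ y := h10
  have nyx : y ≠ x := h10.symm
  have nxz : x ≠ z := h11
  have nzx : z ≠ x := h11.symm
  have nxu : x ≠ u := h12
  have nux : u ≠ x := h12.symm
  have nyz : y ≠ z := h13
  have nzy : z ≠ y := h13.symm
  have nyu : y ≠ u := h14
  have nuy : u ≠ y := h14.symm
  have nzu : z ≠ u := h15
  have nuz : u ≠ z := h15.symm
  have mw : w ∈ C.support := C.fst_mem_support_of_mem_edges hwv
  have mv : v ∈ C.support := C.snd_mem_support_of_mem_edges hwv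
  have mx : x ∈ C.support := C.snd_mem_support_of_mem_edges hvx
  have my : y ∈ C.support := C.snd_mem_support_of_mem_edges hxy
  have mz : z ∈ C.support := C.snd_mem_support_of_mem_edges hyz
  have mu : u ∈ C.support := C.snd_mem_support_of_mem_edges hzu
  have naw : a ≠ w := fun h => ha (h ▸ mw)
  have nwa : w ≠ a := (naw).symm
  have nav : a ≠ v := fun h => ha (h ▸ mv)
  have nva : v ≠ a := (nav).symm
  have nax : a ≠ x := fun h => ha (h ▸ mx)
  have nxa : x ≠ a := (nax).symm
  have nay : a ≠ y := fun h => ha (h ▸ my)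
  have nya : y ≠ a := (nay).symm
  have naz : a ≠ z := fun h => ha (h ▸ mz)
  have nza : z ≠ a := (naz).symm
  have nau : a ≠ u := fun h => ha (h ▸ mu)
  have nua : u ≠ a := (nau).symm
  have nbw : b ≠ w := fun h => hb (h ▸ mw)
  have nwb : w ≠ b := (nbw).symm
  have nbv : b ≠ v := fun h => hb (h ▸ mv)
  have nvb : v ≠ b := (nbv).symm
  have nbx : b ≠ x := fun h => hb (h ▸ mx)
  have nxb : x ≠ b := (nbx).symm
  have nby : b ≠ y := fun h => hb (h ▸ my)
  have nyb : y ≠ b := (nby).symm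
  have nbz : b ≠ z := fun h => hb (h ▸ mz)
  have nzb : z ≠ b := (nbz).symm
  have nbu : b ≠ u := fun h => hb (h ▸ mu)
  have nub : u ≠ b := (nbu).symm
  have ncw : c ≠ w := fun h => hc (h ▸ mw)
  have nwc : w ≠ c := (ncw).symm
  have ncv : c ≠ v := fun h => hc (h ▸ mv)
  have nvc : v ≠ c := (ncv).symm
  have ncx : c ≠ x := fun h => hc (h ▸ mx)
  have nxc : x ≠ c := (ncx).symm
  have ncy : c ≠ y := fun h => hc (h ▸ my)
  have nyc : y ≠ c := (ncy).symm
  have ncz : c ≠ z := fun h => hc (h ▸ mz)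
  have nzc : z ≠ c := (ncz).symm
  have ncu : c ≠ u := fun h => hc (h ▸ mu)
  have nuc : u ≠ c := (ncu).symm
  have nab : a ≠ b := g1
  have nba : b ≠ a := g1.symm
  have nac : a ≠ c := g2
  have nca : c ≠ a := g2.symm
  have nbc : b ≠ c := g3
  have ncb : c ≠ b := g3.symm
  have hxv : G.Adj x v := (C.adj_of_mem_edges hvx).symm
  have hzy : G.Adj z y := (C.adj_of_mem_edges hyz).symm
  -- rotate/orient the cycle to start with the edge w-v
  obtain ⟨a1, E1, hcyc, hlen, hsupp, hedge⟩ := cycle_cons_of_edge hC hwv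
  -- peel v-x
  have hnd1 : E1.support.Nodup := by simpa using hcyc.2
  have hm1 : s(v, x) ∈ E1.edges := by
    have := (hedge _).mpr hvx
    simp only [Walk.edges_cons, List.mem_cons, Sym2.eq_iff] at this
    tauto
  obtain ⟨a2, E2, rfl⟩ := walk_cons_of_edge E1
    (by rw [E1.support_eq_cons] at hnd1; exact (List.nodup_cons.mp hnd1).1) hm1
  -- peel x-y
  have hnd2 : E2.support.Nodup := by
    rw [Walk.support_cons] at hnd1; exact hnd1.of_cons
  have hm2 : s(x, y) ∈ E2.edges := by
    have := (hedge _).mpr hxy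
    simp only [Walk.edges_cons, List.mem_cons, Sym2.eq_iff] at this
    tauto
  obtain ⟨a3, E3, rfl⟩ := walk_cons_of_edge E2
    (by rw [E2.support_eq_cons] at hnd2; exact (List.nodup_cons.mp hnd2).1) hm2
  -- peel y-z
  have hnd3 : E3.support.Nodup := by
    rw [Walk.support_cons] at hnd2; exact hnd2.of_cons
  have hm3 : s(y, z) ∈ E3.edges := by
    have := (hedge _).mpr hyz
    simp only [Walk.edges_cons, List.mem_cons, Sym2.eq_iff] at this
    tauto
  obtain ⟨a4, E4, rfl⟩ := walk_cons_of_edge E3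
    (by rw [E3.support_eq_cons] at hnd3; exact (List.nodup_cons.mp hnd3).1) hm3
  -- peel z-u
  have hnd4 : E4.support.Nodup := by
    rw [Walk.support_cons] at hnd3; exact hnd3.of_cons
  have hm4 : s(z, u) ∈ E4.edges := by
    have := (hedge _).mpr hzu
    simp only [Walk.edges_cons, List.mem_cons, Sym2.eq_iff] at this
    tauto
  obtain ⟨a5, P, rfl⟩ := walk_cons_of_edge E4
    (by rw [E4.support_eq_cons] at hnd4; exact (List.nodup_cons.mp hnd4).1) hm4
  -- now the cycle is  w-v-x-y-z-u ++ P  with P : Walk u w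
  -- facts about P
  have hndP : P.support.Nodup := by
    rw [Walk.support_cons] at hnd4; exact hnd4.of_cons
  have hvP : v ∉ P.support := fun h =>
    (List.nodup_cons.mp hnd1).1 (by simp [Walk.support_cons, h])
  have hxP : x ∉ P.support := fun h =>
    (List.nodup_cons.mp hnd2).1 (by simp [Walk.support_cons, h])
  have hyP : y ∉ P.support := fun h =>
    (List.nodup_cons.mp hnd3).1 (by simp [Walk.support_cons, h])
  have hzP : z ∉ P.support := (List.nodup_cons.mp hnd4).1
  have haP : a ∉ P.support := fun h => ha ((hsupp a).mp (by simp [Walk.support_cons, h]))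
  have hbP : b ∉ P.support := fun h => hb ((hsupp b).mp (by simp [Walk.support_cons, h]))
  have hcP : c ∉ P.support := fun h => hc ((hsupp c).mp (by simp [Walk.support_cons, h]))
  have hPed : P.edges.Nodup := by
    have := hcyc.1.1.edges_nodup
    simp only [Walk.edges_cons] at this
    exact ((((this.of_cons).of_cons).of_cons).of_cons).of_cons
  have hwvP : s(w, v) ∉ P.edges := fun h => hvP (P.snd_mem_support_of_mem_edges h)
  have hvxP : s(v, x) ∉ P.edges := fun h => hvP (P.fst_mem_support_of_mem_edges h)
  have hxyP : s(x, y) ∉ P.edges := fun h => hxP (P.fst_mem_support_of_mem_edges h)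
  have hyzP : s(y, z) ∉ P.edges := fun h => hyP (P.fst_mem_support_of_mem_edges h)
  have hzuP : s(z, u) ∉ P.edges := fun h => hzP (P.fst_mem_support_of_mem_edges h)
  have hwbP : s(w, b) ∉ P.edges := fun h => hbP (P.snd_mem_support_of_mem_edges h)
  have hbxP : s(b, x) ∉ P.edges := fun h => hbP (P.fst_mem_support_of_mem_edges h)
  have hxvP : s(x, v) ∉ P.edges := fun h => hxP (P.fst_mem_support_of_mem_edges h)
  have hvaP : s(v, a) ∉ P.edges := fun h => hvP (P.fst_mem_support_of_mem_edges h)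
  have hazP : s(a, z) ∉ P.edges := fun h => haP (P.fst_mem_support_of_mem_edges h)
  have hzyP : s(z, y) ∉ P.edges := fun h => hzP (P.fst_mem_support_of_mem_edges h)
  have hycP : s(y, c) ∉ P.edges := fun h => hyP (P.fst_mem_support_of_mem_edges h)
  have hcuP : s(c, u) ∉ P.edges := fun h => hcP (P.fst_mem_support_of_mem_edges h)
  -- the new cycle
  set Q : G.Walk w u := Walk.cons hbw.symm (Walk.cons hbx (Walk.cons hxv (Walk.cons hav.symm
    (Walk.cons haz (Walk.cons hzy (Walk.cons hcy.symm (Walk.cons hcu Walk.nil))))))) with hQdef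
  have hCs : (Q.append P).support = w::b::x::v::a::z::y::c::P.support := by
    rw [Walk.support_append, hQdef]
    simp only [Walk.support_cons, Walk.support_nil, List.cons_append, List.nil_append,
      List.singleton_append]
    rw [← P.support_eq_cons]
  have hCe : (Q.append P).edges =
      s(w,b)::s(b,x)::s(x,v)::s(v,a)::s(a,z)::s(z,y)::s(y,c)::s(c,u)::P.edges := by
    rw [Walk.edges_append, hQdef]
    simp [Walk.edges_cons, Walk.edges_nil]
  have hDs : ∀ t, t ∈ C.support ↔
      (t = w ∨ t = v ∨ t = x ∨ t = y ∨ t = z ∨ t ∈ P.support) := by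
    intro t; rw [← hsupp]; simp [Walk.support_cons]
  have hDe : ∀ e, e ∈ C.edges ↔ (e = s(w,v) ∨ e = s(v,x) ∨ e = s(x,y) ∨ e = s(y,z)
      ∨ e = s(z,u) ∨ e ∈ P.edges) := by
    intro e; rw [← hedge]; simp [Walk.edges_cons]
  refine ⟨w, Q.append P, ?_, ?_, ?_, ?_⟩
  · rw [Walk.isCycle_def]
    refine ⟨?_, ?_, ?_⟩
    · rw [Walk.isTrail_def, hCe]
      simp only [List.nodup_cons, List.mem_cons, Sym2.eq_iff, not_or]
      refine ⟨?_, ?_, ?_, ?_, ?_, ?_, ?_, ⟨?_, hPed⟩⟩ <;>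
        simp [Sym2.eq_iff, hwbP, hbxP, hxvP, hvaP, hazP, hzyP, hycP, hcuP, nwv, nvw, nwx, nxw, nwy, nyw, nwz, nzw, nwu, nuw, nvx, nxv, nvy, nyv, nvz, nzv, nvu, nuv, nxy, nyx, nxz, nzx, nxu, nux, nyz, nzy, nyu, nuy, nzu, nuz, naw, nwa, nav, nva, nax, nxa, nay, nya, naz, nza, nau, nua, nbw, nwb, nbv, nvb, nbx, nxb, nby, nyb, nbz, nzb, nbu, nub, ncw, nwc, ncv, nvc, ncx, nxc, ncy, nyc, ncz, nzc, ncu, nuc, nab, nba, nac, nca, nbc, ncb]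
    · rw [hQdef, Walk.cons_append]; simp
    · rw [hCs, List.tail_cons]
      simp only [List.nodup_cons, List.mem_cons, not_or]
      refine ⟨?_, ?_, ?_, ?_, ?_, ?_, ?_, hndP⟩ <;>
        simp [hbP, hxP, hvP, haP, hzP, hyP, hcP, nwv, nvw, nwx, nxw, nwy, nyw, nwz, nzw, nwu, nuw, nvx, nxv, nvy, nyv, nvz, nzv, nvu, nuv, nxy, nyx, nxz, nzx, nxu, nux, nyz, nzy, nyu, nuy, nzu, nuz, naw, nwa, nav, nva, nax, nxa, nay, nya, naz, nza, nau, nua, nbw, nwb, nbv, nvb, nbx, nxb, nby, nyb, nbz, nzb, nbu, nub, ncw, nwc, ncv, nvc, ncx, nxc, ncy, nyc, ncz, nzc, ncu, nuc, nab, nba, nac, nca, nbc, ncb]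
  · have hlen' := hlen
    simp only [Walk.length_cons] at hlen'
    rw [Walk.length_append, hQdef]
    simp only [Walk.length_cons, Walk.length_nil]
    omega
  · intro t
    rw [hDs t]
    simp only [hCs, List.mem_cons]
    constructor
    · rintro (h|h|h|h|h|h|h|h|h)
      exacts [Or.inl (Or.inl h), Or.inr (Or.inr (Or.inl h)),
        Or.inl (Or.inr (Or.inr (Or.inl h))), Or.inl (Or.inr (Or.inl h)),
        Or.inr (Or.inl h),
        Or.inl (Or.inr (Or.inr (Or.inr (Or.inr (Or.inl h))))),
        Or.inl (Or.inr (Or.inr (Or.inr (Or.inl h)))),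
        Or.inr (Or.inr (Or.inr h)),
        Or.inl (Or.inr (Or.inr (Or.inr (Or.inr (Or.inr h)))))]
    · rintro ((h|h|h|h|h|h)|h|h|h)
      exacts [Or.inl h,
        Or.inr (Or.inr (Or.inr (Or.inl h))),
        Or.inr (Or.inr (Or.inl h)),
        Or.inr (Or.inr (Or.inr (Or.inr (Or.inr (Or.inr (Or.inl h)))))),
        Or.inr (Or.inr (Or.inr (Or.inr (Or.inr (Or.inl h))))),
        Or.inr (Or.inr (Or.inr (Or.inr (Or.inr (Or.inr (Or.inr (Or.inr h))))))),
        Or.inr (Or.inr (Or.inr (Or.inr (Or.inl h)))),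
        Or.inr (Or.inl h),
        Or.inr (Or.inr (Or.inr (Or.inr (Or.inr (Or.inr (Or.inr (Or.inl h)))))))]
  · ext e
    simp only [Set.mem_setOf_eq, Set.mem_diff, Set.mem_union, Set.mem_insert_iff,
      Set.mem_singleton_iff, hCe, List.mem_cons, hDe e, not_or]
    constructor
    · rintro (rfl | rfl | rfl | rfl | rfl | rfl | rfl | rfl | hP)
      · exact Or.inr (Or.inl rfl)
      · exact Or.inr (Or.inr (Or.inl rfl))
      · exact Or.inr (Or.inr (Or.inr (Or.inl rfl)))
      · exact Or.inr (Or.inr (Or.inr (Or.inr (Or.inl rfl))))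
      · exact Or.inr (Or.inr (Or.inr (Or.inr (Or.inr (Or.inl rfl)))))
      · exact Or.inr (Or.inr (Or.inr (Or.inr (Or.inr (Or.inr (Or.inl rfl))))))
      · exact Or.inr (Or.inr (Or.inr (Or.inr (Or.inr (Or.inr (Or.inr (Or.inl rfl)))))))
      · exact Or.inr (Or.inr (Or.inr (Or.inr (Or.inr (Or.inr (Or.inr (Or.inr rfl)))))))
      · left
        exact ⟨Or.inr (Or.inr (Or.inr (Or.inr (Or.inr hP)))),
          fun h => hwvP (h ▸ hP), fun h => hvxP (h ▸ hP),
          fun h => hxyP (h ▸ hP), fun h => hyzP (h ▸ hP), fun h => hzuP (h ▸ hP)⟩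
    · rintro (⟨h5', hn1, hn2, hn3, hn4, hn5⟩ | h8)
      · rcases h5' with rfl | rfl | rfl | rfl | rfl | hP
        · exact absurd rfl hn1
        · exact absurd rfl hn2
        · exact absurd rfl hn3
        · exact absurd rfl hn4
        · exact absurd rfl hn5
        · exact Or.inr (Or.inr (Or.inr (Or.inr (Or.inr (Or.inr (Or.inr (Or.inr hP)))))))
      · rcases h8 with rfl|rfl|rfl|rfl|rfl|rfl|rfl|rfl
        exacts [Or.inl rfl, Or.inr (Or.inl rfl), Or.inr (Or.inr (Or.inl rfl)),
          Or.inr (Or.inr (Or.inr (Or.inl rfl))),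
          Or.inr (Or.inr (Or.inr (Or.inr (Or.inl rfl)))),
          Or.inr (Or.inr (Or.inr (Or.inr (Or.inr (Or.inl rfl))))),
          Or.inr (Or.inr (Or.inr (Or.inr (Or.inr (Or.inr (Or.inl rfl)))))),
          Or.inr (Or.inr (Or.inr (Or.inr (Or.inr (Or.inr (Or.inr (Or.inl rfl)))))))]
end

section
/- Let G be a simple graph and let C be a cycle of G containing consecutive vertices w, x, y, z. Let c be a vertex of G not on C that is adjacent to both w and y, and suppose x is adjacent to z in G. Then G contains a cycle of length |C| + 1 whose vertex set is V(C) ∪ {c}; the new cycle is obtained from C by replacing the path (w, x, y, z) with the path (w, c, y, x, z). -/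
open SimpleGraph Walk

private lemma path_firstEdge {V : Type*} {G : SimpleGraph V} {u v b : V} {Q : G.Walk u v}
    (hQ : Q.support.Nodup) (hb : s(u, b) ∈ Q.edges) :
    ∃ (h : G.Adj u b) (Q' : G.Walk b v), Q = Walk.cons h Q' := by
  cases Q with
  | nil => simp at hb
  | @cons _ a _ h Q' =>
    rw [Walk.edges_cons, List.mem_cons] at hb
    rcases hb with hb | hb
    · rw [Sym2.eq_iff] at hb
      rcases hb with ⟨-, rfl⟩ | ⟨h1, rfl⟩
      · exact ⟨h, Q', rfl⟩
      · exact absurd h1 h.ne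
    · exfalso
      have := Q'.fst_mem_support_of_mem_edges hb
      simp [Walk.support_cons] at hQ
      exact hQ.1 this

private lemma myCycle_reverse {V : Type*} {G : SimpleGraph V} {u : V} {p : G.Walk u u}
    (h : p.IsCycle) : p.reverse.IsCycle := by
  rw [Walk.isCycle_def] at h ⊢
  obtain ⟨ht, hn, hs⟩ := h
  refine ⟨?_, ?_, ?_⟩
  · rw [Walk.isTrail_def, Walk.edges_reverse, List.nodup_reverse]; exact ht.edges_nodup
  · intro he
    apply hn
    have := congrArg Walk.reverse he
    simpa using this
  · rw [Walk.support_reverse, List.tail_reverse, List.nodup_reverse]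
    have hne : p.support.tail ≠ [] := by
      cases p with
      | nil => simp at hn
      | cons h q => simp [Walk.support_cons]
    have hgl : p.support.tail.getLast hne = u := by
      rw [List.getLast_tail, p.getLast_support]
    have hl := List.dropLast_append_getLast hne
    rw [hgl] at hl
    have hsupp : p.support = u :: p.support.tail := by
      cases p <;> simp [Walk.support_cons]
    have hs' : (p.support.tail.dropLast ++ [u]).Nodup := by rw [hl]; exact hs
    have h1 := List.nodup_append.mp hs'
    rw [hsupp, List.dropLast_cons_of_ne_nil hne]
    refine List.nodup_cons.mpr ⟨fun hu => h1.2.2 u hu u (by simp) rfl, h1.1⟩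

private lemma mem_support_iff_tail {V : Type*} {G : SimpleGraph V} {u : V} {p : G.Walk u u}
    (hp : p ≠ Walk.nil) (t : V) : t ∈ p.support ↔ t ∈ p.support.tail := by
  cases p with
  | nil => exact absurd rfl hp
  | cons h q =>
    simp only [Walk.support_cons, List.tail_cons, List.mem_cons]
    constructor
    · rintro (rfl | ht)
      · exact q.end_mem_support
      · exact ht
    · exact Or.inr

private lemma cycle_decomp {V : Type*} {G : SimpleGraph V} {x b : V} {D : G.Walk x x}
    (hD : D.IsCycle) (hb : s(x, b) ∈ D.edges) :
    (∃ (h : G.Adj x b) (P : G.Walk b x), D = Walk.cons h P) ∨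
    (∃ (h : G.Adj x b) (P : G.Walk b x), D.reverse = Walk.cons h P) := by
  cases D with
  | nil => simp at hb
  | @cons _ a _ h P =>
    rw [Walk.edges_cons, List.mem_cons] at hb
    rcases hb with hb | hb
    · rw [Sym2.eq_iff] at hb
      rcases hb with ⟨-, rfl⟩ | ⟨h1, rfl⟩
      · exact Or.inl ⟨h, P, rfl⟩
      · exact absurd h1 h.ne
    · right
      have hPnodup : P.support.Nodup := by
        have := hD.support_nodup
        simpa using this
      have hrev : s(x, b) ∈ P.reverse.edges := by
        rw [Walk.edges_reverse, List.mem_reverse]; exact hb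
      have hPrnodup : P.reverse.support.Nodup := by
        rw [Walk.support_reverse, List.nodup_reverse]; exact hPnodup
      obtain ⟨h', R, hR⟩ := path_firstEdge hPrnodup hrev
      refine ⟨h', R.append (Walk.cons h.symm Walk.nil), ?_⟩
      rw [Walk.reverse_cons, hR]
      rfl

private lemma key {V : Type*} {G : SimpleGraph V} {x y : V} (w z c : V)
    (hdist : [w, x, y, z].Pairwise (· ≠ ·))
    (hxy : G.Adj x y) (P : G.Walk y x)
    (hE : (Walk.cons hxy P).IsCycle)
    (hwx : s(w, x) ∈ (Walk.cons hxy P).edges) (hyz : s(y, z) ∈ (Walk.cons hxy P).edges)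
    (hc : c ∉ (Walk.cons hxy P).support) (hcw : G.Adj c w) (hcy : G.Adj c y)
    (hxz : G.Adj x z) :
    ∃ (C' : G.Walk w w), C'.IsCycle ∧ C'.length = (Walk.cons hxy P).length + 1 ∧
      (∀ t, t ∈ C'.support ↔ t ∈ (Walk.cons hxy P).support ∨ t = c) ∧
      {e | e ∈ C'.edges} =
        ({e | e ∈ (Walk.cons hxy P).edges} \ {s(w, x), s(x, y), s(y, z)}) ∪
          {s(w, c), s(c, y), s(y, x), s(x, z)} := by
  rw [List.pairwise_cons] at hdist
  obtain ⟨hw, hdist⟩ := hdist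
  rw [List.pairwise_cons] at hdist
  obtain ⟨hx, hdist⟩ := hdist
  rw [List.pairwise_cons] at hdist
  obtain ⟨hy, -⟩ := hdist
  have hwx2 : w ≠ x := hw x (by simp)
  have hwy : w ≠ y := hw y (by simp)
  have hwz : w ≠ z := hw z (by simp)
  have hxy2 : x ≠ y := hx y (by simp)
  have hxz2 : x ≠ z := hx z (by simp)
  have hyz2 : y ≠ z := hy z (by simp)
  -- P is a path
  have hPnodup : P.support.Nodup := by have := hE.support_nodup; simpa using this
  -- s(y,z) is an edge of P
  have hyzP : s(y, z) ∈ P.edges := by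
    rw [Walk.edges_cons, List.mem_cons] at hyz
    rcases hyz with h0 | h0
    · exfalso
      rw [Sym2.eq_iff] at h0
      rcases h0 with ⟨h1, -⟩ | ⟨-, h2⟩
      · exact hxy2 h1.symm
      · exact hxz2 h2.symm
    · exact h0
  obtain ⟨hyzadj, Q, hPdec⟩ := path_firstEdge hPnodup hyzP
  subst hPdec
  -- s(w,x) is an edge of Q
  have hwxQ : s(w, x) ∈ Q.edges := by
    rw [Walk.edges_cons, Walk.edges_cons, List.mem_cons, List.mem_cons] at hwx
    rcases hwx with h0 | h0 | h0
    · exfalso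
      rw [Sym2.eq_iff] at h0
      rcases h0 with ⟨h1, -⟩ | ⟨h1, -⟩
      · exact hwx2 h1
      · exact hwy h1
    · exfalso
      rw [Sym2.eq_iff] at h0
      rcases h0 with ⟨h1, -⟩ | ⟨h1, -⟩
      · exact hwy h1
      · exact hwz h1
    · exact h0
  have hyQ : y ∉ Q.support ∧ Q.support.Nodup := by
    rw [Walk.support_cons, List.nodup_cons] at hPnodup
    exact hPnodup
  have hQrev : s(x, w) ∈ Q.reverse.edges := by
    rw [Walk.edges_reverse, List.mem_reverse, Sym2.eq_swap]
    exact hwxQ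
  have hQrnodup : Q.reverse.support.Nodup := by
    rw [Walk.support_reverse, List.nodup_reverse]; exact hyQ.2
  obtain ⟨hxwadj, R, hQr⟩ := path_firstEdge hQrnodup hQrev
  have hQdec : Q = (Walk.cons hxwadj R).reverse := by
    rw [← hQr, Walk.reverse_reverse]
  subst hQdec
  have hTrail := hE.isTrail.edges_nodup
  simp [Walk.edges_append, List.nodup_append] at hTrail
  have hsupnd := hE.support_nodup
  simp [Walk.support_append, List.nodup_append] at hsupnd
  simp [Walk.support_append] at hc
  obtain ⟨⟨hyR, -⟩, hRnodup, hxR⟩ := hsupnd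
  obtain ⟨⟨⟨-, -⟩, hxyR, -⟩, ⟨hyzR, -, -⟩, hRednd, hwxR⟩ := hTrail
  obtain ⟨hcx, hcy2, hcR, -⟩ := hc
  have hwR : w ∈ R.support := R.start_mem_support
  have hzR : z ∈ R.support := R.end_mem_support
  have hcz : c ≠ z := fun h => hcR (h ▸ hzR)
  have hcw2 : c ≠ w := hcw.ne
  have e1 : s(y, x) ∉ R.edges := fun h => hyR (R.fst_mem_support_of_mem_edges h)
  have e2 : s(x, z) ∉ R.edges := fun h => hxR _ (R.fst_mem_support_of_mem_edges h) rfl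
  have e3 : s(w, c) ∉ R.edges := fun h => hcR (R.snd_mem_support_of_mem_edges h)
  have e4 : s(c, y) ∉ R.edges := fun h => hcR (R.fst_mem_support_of_mem_edges h)
  refine ⟨Walk.cons hcw.symm (Walk.cons hcy (Walk.cons hxy.symm (Walk.cons hxz R.reverse))),
    ?_, ?_, ?_, ?_⟩
  · rw [Walk.isCycle_def]
    refine ⟨?_, by simp, ?_⟩
    · rw [Walk.isTrail_def]
      simp [Walk.edges_cons, Walk.edges_reverse, List.nodup_cons, List.mem_cons,
        List.mem_reverse, List.nodup_reverse, Sym2.eq_iff, e1, e2, e3, e4, hRednd,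
        hwx2, hwy, hwz, hxy2, hxz2, hyz2, hcx, hcy2, hcz, hcw2,
        Ne.symm hwx2, Ne.symm hwy, Ne.symm hwz, Ne.symm hxy2, Ne.symm hxz2, Ne.symm hyz2,
        Ne.symm hcx, Ne.symm hcy2, Ne.symm hcz, Ne.symm hcw2]
    · simp [Walk.support_cons, Walk.support_reverse, List.tail_cons, List.nodup_cons,
        List.mem_cons, List.mem_reverse, List.nodup_reverse, hRnodup, hyR, hxR, hcR,
        hcx, hcy2, hcz, hcw2, hxy2, Ne.symm hxy2]
      exact fun h => hxR x h rfl
  · simp only [Walk.length_cons, Walk.length_reverse]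
  · intro t
    simp only [Walk.support_cons, Walk.support_reverse, List.mem_cons, List.mem_reverse]
    constructor
    · rintro (rfl | rfl | rfl | rfl | ht)
      · exact Or.inl (Or.inr (Or.inr (Or.inr hwR)))
      · exact Or.inr rfl
      · exact Or.inl (Or.inr (Or.inl rfl))
      · exact Or.inl (Or.inl rfl)
      · exact Or.inl (Or.inr (Or.inr (Or.inr ht)))
    · rintro ((rfl | rfl | rfl | ht) | rfl)
      · exact Or.inr (Or.inr (Or.inr (Or.inl rfl)))
      · exact Or.inr (Or.inr (Or.inl rfl))
      · exact Or.inr (Or.inr (Or.inr (Or.inl rfl)))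
      · exact Or.inr (Or.inr (Or.inr (Or.inr ht)))
      · exact Or.inr (Or.inl rfl)
  · ext e
    simp only [Walk.edges_cons, Walk.edges_reverse, List.mem_cons, List.mem_reverse,
      Set.mem_union, Set.mem_diff, Set.mem_setOf_eq, Set.mem_insert_iff, Set.mem_singleton_iff]
    constructor
    · rintro (rfl | rfl | rfl | rfl | he)
      · exact Or.inr (Or.inl rfl)
      · exact Or.inr (Or.inr (Or.inl rfl))
      · exact Or.inr (Or.inr (Or.inr (Or.inl rfl)))
      · exact Or.inr (Or.inr (Or.inr (Or.inr rfl)))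
      · refine Or.inl ⟨Or.inr (Or.inr (Or.inr he)), ?_⟩
        rintro (rfl | rfl | rfl)
        · exact hwxR _ he rfl
        · exact hxyR he
        · exact hyzR he
    · rintro (⟨(rfl | rfl | rfl | he), hnot⟩ | (rfl | rfl | rfl | rfl))
      · exact absurd (Or.inr (Or.inl rfl)) hnot
      · exact absurd (Or.inr (Or.inr rfl)) hnot
      · exact absurd (Or.inl Sym2.eq_swap) hnot
      · exact Or.inr (Or.inr (Or.inr (Or.inr he)))
      · exact Or.inl rfl
      · exact Or.inr (Or.inl rfl)
      · exact Or.inr (Or.inr (Or.inl rfl))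
      · exact Or.inr (Or.inr (Or.inr (Or.inl rfl)))

/-- Replacement used in Cases 4a and 5: if `w, x, y, z` are consecutive vertices of a
cycle `C`, `c` is a vertex off `C` adjacent to `w` and `y`, and `x` is adjacent to `z`
in `G`, then `G` has a cycle of length `|C| + 1` on vertex set `V(C) ∪ {c}`, obtained
from `C` by replacing the path `(w, x, y, z)` with the path `(w, c, y, x, z)`. -/
theorem case4a5_replacement {V : Type*} (G : SimpleGraph V) {v0 : V}
    (C : G.Walk v0 v0) (hC : C.IsCycle) (w x y z c : V)
    (hdist : [w, x, y, z].Pairwise (· ≠ ·))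
    (hwx : s(w, x) ∈ C.edges) (hxy : s(x, y) ∈ C.edges) (hyz : s(y, z) ∈ C.edges)
    (hc : c ∉ C.support) (hcw : G.Adj c w) (hcy : G.Adj c y) (hxz : G.Adj x z) :
    ∃ (w0 : V) (C' : G.Walk w0 w0), C'.IsCycle ∧ C'.length = C.length + 1 ∧
      (∀ t, t ∈ C'.support ↔ t ∈ C.support ∨ t = c) ∧
      {e | e ∈ C'.edges} =
        ({e | e ∈ C.edges} \ {s(w, x), s(x, y), s(y, z)}) ∪
          {s(w, c), s(c, y), s(y, x), s(x, z)} := by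
  classical
  have hx : x ∈ C.support := C.fst_mem_support_of_mem_edges hxy
  have hD : (C.rotate x hx).IsCycle := hC.rotate hx
  have hmemE : ∀ e, e ∈ (C.rotate x hx).edges ↔ e ∈ C.edges :=
    fun e => (C.rotate_edges x hx).perm.mem_iff
  have hlenD : (C.rotate x hx).length = C.length := by
    have := (C.rotate_darts x hx).perm.length_eq
    simpa [Walk.length_darts] using this
  have hCnn : C ≠ Walk.nil := hC.ne_nil
  have hDnn : C.rotate x hx ≠ Walk.nil := hD.ne_nil
  have hsupD : ∀ t, t ∈ (C.rotate x hx).support ↔ t ∈ C.support := fun t => by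
    rw [mem_support_iff_tail hDnn, mem_support_iff_tail hCnn,
      (C.support_rotate x hx).perm.mem_iff]
  have haux : ∀ (h : G.Adj x y) (P : G.Walk y x), (Walk.cons h P).IsCycle →
      (∀ e, e ∈ (Walk.cons h P).edges ↔ e ∈ C.edges) →
      (∀ t, t ∈ (Walk.cons h P).support ↔ t ∈ C.support) →
      (Walk.cons h P).length = C.length →
      ∃ (w0 : V) (C' : G.Walk w0 w0), C'.IsCycle ∧ C'.length = C.length + 1 ∧
        (∀ t, t ∈ C'.support ↔ t ∈ C.support ∨ t = c) ∧
        {e | e ∈ C'.edges} =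
          ({e | e ∈ C.edges} \ {s(w, x), s(x, y), s(y, z)}) ∪
            {s(w, c), s(c, y), s(y, x), s(x, z)} := by
    intro h P hcyc hmem hsup hlen
    obtain ⟨C', h1, h2, h3, h4⟩ := key w z c hdist h P hcyc ((hmem _).mpr hwx)
      ((hmem _).mpr hyz) (fun hcc => hc ((hsup c).mp hcc)) hcw hcy hxz
    have hset : {e | e ∈ (Walk.cons h P).edges} = {e | e ∈ C.edges} := Set.ext hmem
    refine ⟨w, C', h1, by rw [h2, hlen], fun t => by rw [h3 t, hsup t], ?_⟩
    rw [h4, hset]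
  have hxyD : s(x, y) ∈ (C.rotate x hx).edges := (hmemE _).mpr hxy
  rcases cycle_decomp hD hxyD with ⟨h, P, hdec⟩ | ⟨h, P, hdec⟩
  · refine haux h P ?_ ?_ ?_ ?_
    · rw [← hdec]; exact hD
    · intro e; rw [← hdec]; exact hmemE e
    · intro t; rw [← hdec]; exact hsupD t
    · rw [← hdec]; exact hlenD
  · refine haux h P ?_ ?_ ?_ ?_
    · rw [← hdec]; exact myCycle_reverse hD
    · intro e; rw [← hdec, Walk.edges_reverse, List.mem_reverse]; exact hmemE e
    · intro t; rw [← hdec, Walk.support_reverse, List.mem_reverse]; exact hsupD t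
    · rw [← hdec, Walk.length_reverse]; exact hlenD
end
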